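/- Let C = (c_{mk}) = (I − P^T)^{-1}. Then for all indices m, l ∈ {1,…,K} one has c_{ml} ≤ c_{mm}: every entry of each row of (I − P^T)^{-1} is bounded above by the diagonal entry of that row. -/

import Mathlib

open Matrix Filter Finset

section Aux

variable {ι : Type*} [Fintype ι] [DecidableEq ι]

private lemma pow_entry_nonneg (Q : Matrix ι ι ℝ) (hQ : ∀ i j, 0 ≤ Q i j) :
    ∀ n i j, 0 ≤ (Q ^ n) i j := by
  intro n
  induction n with
  | zero =>
    intro i j
    by_cases h : i = j <;> simp [pow_zero, Matrix.one_apply, h]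
  | succ n ih =>
    intro i j
    rw [pow_succ, Matrix.mul_apply]
    exact Finset.sum_nonneg fun k _ => mul_nonneg (ih i k) (hQ k j)

private lemma pow_row_sum (Q : Matrix ι ι ℝ) (hQ : ∀ i j, 0 ≤ Q i j)
    (hrow : ∀ i, ∑ j, Q i j ≤ 1) : ∀ n i, ∑ j, (Q ^ n) i j ≤ 1 := by
  intro n
  induction n with
  | zero =>
    intro i
    simp [pow_zero, Matrix.one_apply]
  | succ n ih =>
    intro i
    have h : ∑ j, (Q ^ (n + 1)) i j = ∑ k, (Q ^ n) i k * ∑ j, Q k j := by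
      simp only [pow_succ, Matrix.mul_apply, Finset.mul_sum]
      exact Finset.sum_comm
    rw [h]
    calc ∑ k, (Q ^ n) i k * ∑ j, Q k j ≤ ∑ k, (Q ^ n) i k * 1 := by
          refine Finset.sum_le_sum fun k _ => ?_
          exact mul_le_mul_of_nonneg_left (hrow k) (pow_entry_nonneg Q hQ n i k)
      _ ≤ 1 := by simpa using ih i

private lemma pow_entry_le_one (Q : Matrix ι ι ℝ) (hQ : ∀ i j, 0 ≤ Q i j)
    (hrow : ∀ i, ∑ j, Q i j ≤ 1) (n : ℕ) (i j : ι) : (Q ^ n) i j ≤ 1 := by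
  have h1 : (Q ^ n) i j ≤ ∑ k, (Q ^ n) i k :=
    Finset.single_le_sum (fun k _ => pow_entry_nonneg Q hQ n i k) (Finset.mem_univ j)
  exact h1.trans (pow_row_sum Q hQ hrow n i)

private lemma pow_entry_mono (Q R : Matrix ι ι ℝ) (hQ : ∀ i j, 0 ≤ Q i j)
    (hQR : ∀ i j, Q i j ≤ R i j) : ∀ n i j, (Q ^ n) i j ≤ (R ^ n) i j := by
  have hR : ∀ i j, 0 ≤ R i j := fun i j => (hQ i j).trans (hQR i j)
  intro n
  induction n with
  | zero => intro i j; simp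
  | succ n ih =>
    intro i j
    rw [pow_succ, pow_succ, Matrix.mul_apply, Matrix.mul_apply]
    refine Finset.sum_le_sum fun k _ => ?_
    exact mul_le_mul (ih i k) (hQR k j) (hQ k j) (pow_entry_nonneg R hR n i k)

/-- Key existence lemma: a nonnegative solution of `x = v + Q x` exists provided the
partial Neumann sums are bounded above. -/
private lemma exists_fixed (Q : Matrix ι ι ℝ) (hQ : ∀ i j, 0 ≤ Q i j)
    (v : ι → ℝ) (hv : ∀ i, 0 ≤ v i) (c : ι → ℝ)
    (hc : ∀ N i, ∑ n ∈ Finset.range N, ((Q ^ n).mulVec v) i ≤ c i) :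
    ∃ x : ι → ℝ, (∀ i, 0 ≤ x i) ∧ ∀ i, x i = v i + ∑ j, Q i j * x j := by
  set S : ℕ → ι → ℝ := fun N i => ∑ n ∈ Finset.range N, ((Q ^ n).mulVec v) i with hS
  have hterm : ∀ n i, 0 ≤ ((Q ^ n).mulVec v) i := fun n i =>
    Finset.sum_nonneg fun j _ => mul_nonneg (pow_entry_nonneg Q hQ n i j) (hv j)
  have hmono : ∀ i, Monotone fun N => S N i := by
    intro i
    apply monotone_nat_of_le_succ
    intro N
    simp only [hS, Finset.sum_range_succ]
    exact le_add_of_nonneg_right (hterm N i)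
  have hbdd : ∀ i, BddAbove (Set.range fun N => S N i) := fun i =>
    ⟨c i, by rintro y ⟨N, rfl⟩; exact hc N i⟩
  set x : ι → ℝ := fun i => ⨆ N, S N i with hx
  have hlim : ∀ i, Tendsto (fun N => S N i) atTop (nhds (x i)) := fun i =>
    tendsto_atTop_ciSup (hmono i) (hbdd i)
  refine ⟨x, fun i => ?_, fun i => ?_⟩
  · have h0 : S 0 i = 0 := by simp [hS]
    have := le_ciSup (hbdd i) 0
    rw [h0] at this
    exact this
  · have hrec : ∀ N, S (N + 1) i = v i + ∑ j, Q i j * S N j := by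
      intro N
      simp only [hS]
      rw [Finset.sum_range_succ']
      have h0 : ((Q ^ 0).mulVec v) i = v i := by simp [Matrix.one_mulVec]
      have hstep : ∀ n, ((Q ^ (n + 1)).mulVec v) i = ∑ j, Q i j * ((Q ^ n).mulVec v) j := by
        intro n
        rw [pow_succ', ← Matrix.mulVec_mulVec]
        rfl
      rw [h0]
      simp only [hstep]
      rw [Finset.sum_comm]
      simp only [← Finset.mul_sum]
      ring
    have h1 : Tendsto (fun N => S (N + 1) i) atTop (nhds (x i)) :=
      (hlim i).comp (tendsto_add_atTop_nat 1)
    have h2 : Tendsto (fun N => v i + ∑ j, Q i j * S N j) atTop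
        (nhds (v i + ∑ j, Q i j * x j)) := by
      refine Tendsto.const_add _ ?_
      exact tendsto_finset_sum _ fun j _ => ((hlim j).const_mul (Q i j))
    simp only [hrec] at h1
    exact tendsto_nhds_unique h1 h2

end Aux

/-- Lemma 3.1 (le:sush_os'): for `C = (I − Pᵀ)⁻¹`, every entry of each row is
bounded above by the diagonal entry of that row: `c_{ml} ≤ c_{mm}`. -/
theorem stmt_8 {K : ℕ} (P : Matrix (Fin (K + 1)) (Fin (K + 1)) ℝ)
    (hP : ∀ k l, 0 ≤ P k l) (hProw : ∀ k, ∑ l, P k l ≤ 1)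
    (hspec : ∀ z ∈ spectrum ℂ (P.map Complex.ofReal), ‖z‖ < 1)
    (m l : Fin (K + 1)) :
    (((1 : Matrix (Fin (K + 1)) (Fin (K + 1)) ℝ) - Pᵀ)⁻¹) m l
      ≤ (((1 : Matrix (Fin (K + 1)) (Fin (K + 1)) ℝ) - Pᵀ)⁻¹) m m := by
  classical
  set A : Matrix (Fin (K+1)) (Fin (K+1)) ℝ := 1 - P with hA
  -- Step 1: invertibility of A = 1 - P
  have hdet : IsUnit A.det := by
    by_contra h
    have hdet0 : A.det = 0 := by simpa [isUnit_iff_ne_zero] using h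
    have hmap : ((1 : Matrix (Fin (K+1)) (Fin (K+1)) ℂ) - P.map Complex.ofReal)
        = A.map Complex.ofRealHom := by
      ext i j
      by_cases hij : i = j <;>
        simp [hA, Matrix.map_apply, Matrix.sub_apply, Matrix.one_apply, hij]
    have hdetC : ((1 : Matrix (Fin (K+1)) (Fin (K+1)) ℂ) - P.map Complex.ofReal).det = 0 := by
      rw [hmap]
      have hd := (Complex.ofRealHom).map_det A
      rw [show (A.map ⇑Complex.ofRealHom).det = (Complex.ofRealHom.mapMatrix A).det from rfl,
        ← hd, hdet0]
      simp
    have h1 : (1 : ℂ) ∈ spectrum ℂ (P.map Complex.ofReal) := by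
      rw [spectrum.mem_iff, _root_.map_one, Matrix.isUnit_iff_isUnit_det, hdetC]
      exact not_isUnit_zero
    have := hspec 1 h1
    simp at this
  have hAB : A * A⁻¹ = 1 := Matrix.mul_nonsing_inv A hdet
  have hBA : A⁻¹ * A = 1 := Matrix.nonsing_inv_mul A hdet
  -- Step 2: reduce the goal to columns of A⁻¹
  have htrans : ((1 : Matrix (Fin (K+1)) (Fin (K+1)) ℝ) - Pᵀ) = Aᵀ := by
    rw [hA, Matrix.transpose_sub, Matrix.transpose_one]
  rw [htrans, ← Matrix.transpose_nonsing_inv, Matrix.transpose_apply, Matrix.transpose_apply]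
  -- Goal: A⁻¹ l m ≤ A⁻¹ m m
  -- Step 3: uniform bound on partial Neumann sums of P
  have hboundP : ∀ (t : Fin (K+1)) (N : ℕ) (i : Fin (K+1)),
      ∑ n ∈ Finset.range N, (P ^ n) i t ≤ A⁻¹ i t + ∑ j, |A⁻¹ i j| := by
    have hAG : ∀ N : ℕ, A * (∑ n ∈ Finset.range N, P ^ n) = 1 - P ^ N := by
      intro N
      induction N with
      | zero => simp
      | succ N ih =>
        rw [Finset.sum_range_succ, mul_add, ih]
        have hAP : A * P ^ N = P ^ N - P * P ^ N := by rw [hA, sub_mul, one_mul]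
        rw [hAP, pow_succ']
        abel
    intro t N i
    have hG : (∑ n ∈ Finset.range N, P ^ n) = A⁻¹ - A⁻¹ * P ^ N := by
      calc (∑ n ∈ Finset.range N, P ^ n)
          = (A⁻¹ * A) * (∑ n ∈ Finset.range N, P ^ n) := by rw [hBA, one_mul]
        _ = A⁻¹ * (A * (∑ n ∈ Finset.range N, P ^ n)) := by rw [mul_assoc]
        _ = A⁻¹ * (1 - P ^ N) := by rw [hAG N]
        _ = A⁻¹ - A⁻¹ * P ^ N := by rw [mul_sub, mul_one]
    have hentry : ∑ n ∈ Finset.range N, (P ^ n) i t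
        = A⁻¹ i t - ∑ j, A⁻¹ i j * (P ^ N) j t := by
      have hGe := congrFun (congrFun hG i) t
      simpa [Matrix.sum_apply, Matrix.sub_apply, Matrix.mul_apply] using hGe
    rw [hentry]
    have hZ : -(∑ j, |A⁻¹ i j|) ≤ ∑ j, A⁻¹ i j * (P ^ N) j t := by
      have hterm : ∀ j : Fin (K+1), -(|A⁻¹ i j|) ≤ A⁻¹ i j * (P ^ N) j t := by
        intro j
        nlinarith [pow_entry_le_one P hP hProw N j t, pow_entry_nonneg P hP N j t,
          abs_nonneg (A⁻¹ i j), neg_abs_le (A⁻¹ i j), le_abs_self (A⁻¹ i j)]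
      calc -(∑ j, |A⁻¹ i j|) = ∑ j, -(|A⁻¹ i j|) := by rw [Finset.sum_neg_distrib]
        _ ≤ ∑ j, A⁻¹ i j * (P ^ N) j t := Finset.sum_le_sum fun j _ => hterm j
    linarith
  -- helper: mulVec against an indicator vector
  have hmv : ∀ (Q : Matrix (Fin (K+1)) (Fin (K+1)) ℝ) (t i : Fin (K+1)),
      (Q.mulVec (fun j => if j = t then (1:ℝ) else 0)) i = Q i t := by
    intro Q t i
    simp [Matrix.mulVec, dotProduct, mul_ite, mul_one, mul_zero, Finset.sum_ite_eq']
  -- Step 4: the column x of A⁻¹ at m, nonnegative at m, with its fixed point equation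
  set em : Fin (K+1) → ℝ := fun i => if i = m then (1:ℝ) else 0 with hem
  obtain ⟨y, hy0, hyeq⟩ := exists_fixed P hP em
    (fun i => by by_cases h : i = m <;> simp [hem, h])
    (fun i => A⁻¹ i m + ∑ j, |A⁻¹ i j|)
    (by intro N i; simp only [hem, hmv]; exact hboundP m N i)
  have hAentry : ∀ i j, A i j = (if i = j then (1:ℝ) else 0) - P i j := by
    intro i j
    simp [hA, Matrix.sub_apply, Matrix.one_apply]
  have hAy : ∀ i, ∑ j, A i j * y j = em i := by
    intro i
    have expand : ∑ j, A i j * y j = y i - ∑ j, P i j * y j := by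
      simp only [hAentry, sub_mul, Finset.sum_sub_distrib, ite_mul, one_mul, zero_mul,
        Finset.sum_ite_eq, Finset.mem_univ, if_true]
    rw [expand]
    linarith [hyeq i]
  have hyB : ∀ i, y i = A⁻¹ i m := by
    intro i
    calc y i = ∑ k, (1 : Matrix (Fin (K+1)) (Fin (K+1)) ℝ) i k * y k := by
          simp [Matrix.one_apply, ite_mul, one_mul, zero_mul, Finset.sum_ite_eq]
      _ = ∑ k, (A⁻¹ * A) i k * y k := by rw [hBA]
      _ = ∑ j, A⁻¹ i j * ∑ k, A j k * y k := by
          simp only [Matrix.mul_apply, Finset.sum_mul, Finset.mul_sum]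
          rw [Finset.sum_comm]
          refine Finset.sum_congr rfl fun j _ => Finset.sum_congr rfl fun k _ => by ring
      _ = ∑ j, A⁻¹ i j * em j := by simp_rw [hAy]
      _ = A⁻¹ i m := by simp [hem, mul_ite, mul_one, mul_zero, Finset.sum_ite_eq']
  have hx0 : 0 ≤ A⁻¹ m m := by rw [← hyB m]; exact hy0 m
  have hxeq : ∀ i, A⁻¹ i m = em i + ∑ j, P i j * A⁻¹ j m := by
    intro i
    rw [← hyB i, hyeq i]
    congr 1
    exact Finset.sum_congr rfl fun j _ => by rw [hyB j]
  -- Step 5: the matrix P' (P with column m zeroed) and its inverse D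
  set P' : Matrix (Fin (K+1)) (Fin (K+1)) ℝ :=
    Matrix.of (fun i j => if j = m then 0 else P i j) with hP'
  have hP'0 : ∀ i j, 0 ≤ P' i j := by
    intro i j
    by_cases h : j = m
    · rw [h]; simp [hP']
    · simpa [hP', h] using hP i j
  have hP'le : ∀ i j, P' i j ≤ P i j := by
    intro i j
    by_cases h : j = m
    · rw [h]; simp [hP']; exact hP i m
    · simp [hP', h]
  have hP'm : ∀ i, P' i m = 0 := by intro i; simp [hP']
  have hDex : ∀ t : Fin (K+1), ∃ x : Fin (K+1) → ℝ, (∀ i, 0 ≤ x i) ∧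
      ∀ i, x i = (if i = t then (1:ℝ) else 0) + ∑ j, P' i j * x j := by
    intro t
    refine exists_fixed P' hP'0 _ (fun i => by by_cases h : i = t <;> simp [h])
      (fun i => A⁻¹ i t + ∑ j, |A⁻¹ i j|) ?_
    intro N i
    simp only [hmv]
    calc ∑ n ∈ Finset.range N, (P' ^ n) i t
        ≤ ∑ n ∈ Finset.range N, (P ^ n) i t :=
          Finset.sum_le_sum fun n _ => pow_entry_mono P' P hP'0 hP'le n i t
      _ ≤ _ := hboundP t N i
  choose d hd0 hdeq using hDex
  set D : Matrix (Fin (K+1)) (Fin (K+1)) ℝ := Matrix.of (fun i t => d t i) with hD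
  have hD0 : ∀ i k, 0 ≤ D i k := fun i k => hd0 k i
  have hA'D : ((1 : Matrix (Fin (K+1)) (Fin (K+1)) ℝ) - P') * D = 1 := by
    ext i t
    rw [Matrix.mul_apply]
    have expand : ∑ j, ((1 : Matrix (Fin (K+1)) (Fin (K+1)) ℝ) - P') i j * D j t
        = d t i - ∑ j, P' i j * d t j := by
      simp only [Matrix.sub_apply, Matrix.one_apply, hD, Matrix.of_apply, sub_mul, ite_mul,
        one_mul, zero_mul, Finset.sum_sub_distrib, Finset.sum_ite_eq, Finset.mem_univ, if_true]
    rw [expand]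
    have h := hdeq t i
    rw [Matrix.one_apply]
    linarith
  have hDA' : D * ((1 : Matrix (Fin (K+1)) (Fin (K+1)) ℝ) - P') = 1 :=
    mul_eq_one_comm.mp hA'D
  have hDm : ∀ i, D i m = if i = m then (1:ℝ) else 0 := by
    intro i
    have h := congrFun (congrFun hDA' i) m
    rw [Matrix.mul_apply] at h
    simpa [Matrix.sub_apply, Matrix.one_apply, hP'm, sub_zero, mul_ite, mul_one, mul_zero,
      Finset.sum_ite_eq', Finset.mem_univ, if_true] using h
  -- Step 6: the hitting probabilities a i = ∑ k, D i k * P k m are at most 1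
  have ha_le : ∀ i, ∑ k, D i k * P k m ≤ 1 := by
    intro i
    have hPkm_le : ∀ k, P k m ≤ 1 - ∑ j, P' k j := by
      intro k
      have hsplit : ∑ j, (P k j - P' k j) = P k m := by
        have hj : ∀ j, P k j - P' k j = if j = m then P k m else 0 := by
          intro j
          by_cases h : j = m <;> simp [hP', h]
        simp only [hj]
        simp [Finset.sum_ite_eq']
      have hsub : ∑ j, P k j - ∑ j, P' k j = P k m := by
        rw [← Finset.sum_sub_distrib]; exact hsplit
      linarith [hProw k]
    have hsum1 : ∑ k, D i k * (1 - ∑ j, P' k j) = 1 := by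
      have lhs : ∑ k, D i k * (1 - ∑ j, P' k j)
          = ∑ k, D i k - ∑ j, ∑ k, D i k * P' k j := by
        simp only [mul_sub, mul_one, Finset.mul_sum, Finset.sum_sub_distrib]
        rw [Finset.sum_comm]
      have rhs : ∀ j, (D * ((1 : Matrix (Fin (K+1)) (Fin (K+1)) ℝ) - P')) i j
          = D i j - ∑ k, D i k * P' k j := by
        intro j
        simp only [Matrix.mul_apply, Matrix.sub_apply, Matrix.one_apply, mul_sub,
          Finset.sum_sub_distrib, mul_ite, mul_one, mul_zero, Finset.sum_ite_eq',
          Finset.mem_univ, if_true]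
      have hall : ∑ j, (D i j - ∑ k, D i k * P' k j)
          = ∑ j, (1 : Matrix (Fin (K+1)) (Fin (K+1)) ℝ) i j := by
        refine Finset.sum_congr rfl fun j _ => ?_
        rw [← rhs j, hDA']
      rw [Finset.sum_sub_distrib] at hall
      have hone : ∑ j, (1 : Matrix (Fin (K+1)) (Fin (K+1)) ℝ) i j = 1 := by
        simp [Matrix.one_apply]
      rw [lhs]
      linarith
    calc ∑ k, D i k * P k m ≤ ∑ k, D i k * (1 - ∑ j, P' k j) :=
          Finset.sum_le_sum fun k _ => mul_le_mul_of_nonneg_left (hPkm_le k) (hD0 i k)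
      _ = 1 := hsum1
  -- Step 7: x i = D i m + (∑ k, D i k * P k m) * x m
  have hxfin : ∀ i, A⁻¹ i m = D i m + (∑ k, D i k * P k m) * A⁻¹ m m := by
    have hu : ∀ i, A⁻¹ i m - ∑ j, P' i j * A⁻¹ j m = em i + P i m * A⁻¹ m m := by
      intro i
      have hj : ∀ j, P i j * A⁻¹ j m - P' i j * A⁻¹ j m
          = if j = m then P i m * A⁻¹ m m else 0 := by
        intro j
        by_cases h : j = m
        · rw [h]; simp [hP']
        · simp [hP', h]
      have hs : ∑ j, (P i j * A⁻¹ j m - P' i j * A⁻¹ j m) = P i m * A⁻¹ m m := by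
        simp only [hj]
        simp [Finset.sum_ite_eq']
      have hsub : ∑ j, P i j * A⁻¹ j m - ∑ j, P' i j * A⁻¹ j m = P i m * A⁻¹ m m := by
        rw [← Finset.sum_sub_distrib]; exact hs
      have := hxeq i
      linarith
    intro i
    have hx1 : A⁻¹ i m = ∑ j, D i j * (A⁻¹ j m - ∑ k, P' j k * A⁻¹ k m) := by
      have hmve : ∀ j, (((1 : Matrix (Fin (K+1)) (Fin (K+1)) ℝ) - P').mulVec
          (fun k => A⁻¹ k m)) j = A⁻¹ j m - ∑ k, P' j k * A⁻¹ k m := by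
        intro j
        simp only [Matrix.mulVec, dotProduct, Matrix.sub_apply, Matrix.one_apply, sub_mul,
          ite_mul, one_mul, zero_mul, Finset.sum_sub_distrib, Finset.sum_ite_eq,
          Finset.mem_univ, if_true]
      calc A⁻¹ i m
          = ((D * ((1 : Matrix (Fin (K+1)) (Fin (K+1)) ℝ) - P')).mulVec
              (fun k => A⁻¹ k m)) i := by rw [hDA', Matrix.one_mulVec]
        _ = (D.mulVec (((1 : Matrix (Fin (K+1)) (Fin (K+1)) ℝ) - P').mulVec
              (fun k => A⁻¹ k m))) i := by rw [Matrix.mulVec_mulVec]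
        _ = ∑ j, D i j * ((((1 : Matrix (Fin (K+1)) (Fin (K+1)) ℝ) - P').mulVec
              (fun k => A⁻¹ k m)) j) := rfl
        _ = ∑ j, D i j * (A⁻¹ j m - ∑ k, P' j k * A⁻¹ k m) :=
            Finset.sum_congr rfl fun j _ => by rw [hmve j]
    rw [hx1]
    have hrw : ∀ j, D i j * (A⁻¹ j m - ∑ k, P' j k * A⁻¹ k m)
        = D i j * (em j + P j m * A⁻¹ m m) := by
      intro j
      rw [hu j]
    simp only [hrw, mul_add, Finset.sum_add_distrib]
    congr 1
    · simp [hem, mul_ite, mul_one, mul_zero, Finset.sum_ite_eq']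
    · rw [Finset.sum_mul]
      exact Finset.sum_congr rfl fun k _ => by ring
  -- Step 8: conclude
  by_cases hlm : l = m
  · subst hlm
    exact le_refl _
  · have h1 := hxfin l
    rw [hDm l, if_neg hlm] at h1
    have h2 : (∑ k, D l k * P k m) * A⁻¹ m m ≤ 1 * A⁻¹ m m :=
      mul_le_mul_of_nonneg_right (ha_le l) hx0
    rw [h1]
    linarith
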